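/- Let θ ∈ (0,1) and λ ∈ (0,1). The map Ψ is twice differentiable with Ψ''(g) = −λ(1−λ)·[ θ²·e^{θg}/(1 − λ + λ·e^{θg})² − (1−θ)²·e^{−(1−θ)g}/(1 − λ + λ·e^{−(1−θ)g})² ], and for every g ∈ ℝ one has |Ψ''(g)| ≤ (θ² + (1−θ)²)/4 ≤ 1/4. -/

import Mathlib

open Real

/-- One-block pre-arbitrage gap update map of the partially active AMM built on
a G3M with weights `(θ, 1-θ)`. -/
noncomputable def Psi (θ lam g : ℝ) : ℝ :=
  g - Real.log (1 - lam + lam * Real.exp (θ * g))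
    + Real.log (1 - lam + lam * Real.exp (-(1 - θ) * g))

/-- The first derivative of `Psi`. -/
noncomputable def PsiDeriv (θ lam g : ℝ) : ℝ :=
  1 - lam * θ * Real.exp (θ * g) / (1 - lam + lam * Real.exp (θ * g))
    - lam * (1 - θ) * Real.exp (-(1 - θ) * g) / (1 - lam + lam * Real.exp (-(1 - θ) * g))

/-- The claimed second derivative of `Psi`. -/
noncomputable def PsiDeriv2 (θ lam g : ℝ) : ℝ :=
  -(lam * (1 - lam)) *
    (θ ^ 2 * Real.exp (θ * g) / (1 - lam + lam * Real.exp (θ * g)) ^ 2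
      - (1 - θ) ^ 2 * Real.exp (-(1 - θ) * g) / (1 - lam + lam * Real.exp (-(1 - θ) * g)) ^ 2)

lemma den_pos {lam : ℝ} (hlam : lam ∈ Set.Ioo (0:ℝ) 1) (c g : ℝ) :
    0 < 1 - lam + lam * Real.exp (c * g) := by
  have := Real.exp_pos (c * g)
  nlinarith [hlam.1, hlam.2]

lemma exp_hasDeriv (c g : ℝ) :
    HasDerivAt (fun x => Real.exp (c * x)) (Real.exp (c * g) * c) g := by
  have h : HasDerivAt (fun x : ℝ => c * x) (c * 1) g := (hasDerivAt_id g).const_mul c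
  simpa using h.exp

lemma den_hasDeriv (lam c g : ℝ) :
    HasDerivAt (fun x => 1 - lam + lam * Real.exp (c * x))
      (lam * (Real.exp (c * g) * c)) g := by
  simpa using ((exp_hasDeriv c g).const_mul lam).const_add (1 - lam)

lemma frac_hasDeriv {lam : ℝ} (hlam : lam ∈ Set.Ioo (0:ℝ) 1) (c k g : ℝ) :
    HasDerivAt (fun x => lam * k * Real.exp (c * x) / (1 - lam + lam * Real.exp (c * x)))
      (lam * k * c * (1 - lam) * Real.exp (c * g) /
        (1 - lam + lam * Real.exp (c * g)) ^ 2) g := by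
  have hD := den_pos hlam c g
  have hnum : HasDerivAt (fun x => lam * k * Real.exp (c * x))
      (lam * k * (Real.exp (c * g) * c)) g := (exp_hasDeriv c g).const_mul (lam * k)
  have h := hnum.div (den_hasDeriv lam c g) (ne_of_gt hD)
  refine h.congr_deriv ?_
  rw [div_eq_div_iff (pow_pos hD 2).ne' (pow_pos hD 2).ne']
  ring

lemma bound_frac {lam : ℝ} (hlam : lam ∈ Set.Ioo (0:ℝ) 1) (c g : ℝ) :
    lam * (1 - lam) * Real.exp (c * g) / (1 - lam + lam * Real.exp (c * g)) ^ 2 ≤ 1 / 4 := by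
  have hD := den_pos hlam c g
  have he := Real.exp_pos (c * g)
  rw [div_le_iff₀ (by positivity)]
  nlinarith [sq_nonneg (1 - lam - lam * Real.exp (c * g))]

theorem stmt3 (θ lam : ℝ) (hθ : θ ∈ Set.Ioo (0:ℝ) 1) (hlam : lam ∈ Set.Ioo (0:ℝ) 1) :
    (∀ g : ℝ, HasDerivAt (Psi θ lam) (PsiDeriv θ lam g) g) ∧
    (∀ g : ℝ, HasDerivAt (PsiDeriv θ lam) (PsiDeriv2 θ lam g) g) ∧
    (∀ g : ℝ, |PsiDeriv2 θ lam g| ≤ (θ ^ 2 + (1 - θ) ^ 2) / 4) ∧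
    (θ ^ 2 + (1 - θ) ^ 2) / 4 ≤ 1 / 4 := by
  refine ⟨?_, ?_, ?_, ?_⟩
  · intro g
    have h1 : HasDerivAt (fun x => Real.log (1 - lam + lam * Real.exp (θ * x)))
        (lam * (Real.exp (θ * g) * θ) / (1 - lam + lam * Real.exp (θ * g))) g :=
      (den_hasDeriv lam θ g).log (ne_of_gt (den_pos hlam θ g))
    have h2 : HasDerivAt (fun x => Real.log (1 - lam + lam * Real.exp (-(1 - θ) * x)))
        (lam * (Real.exp (-(1 - θ) * g) * (-(1 - θ))) /
          (1 - lam + lam * Real.exp (-(1 - θ) * g))) g :=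
      (den_hasDeriv lam (-(1 - θ)) g).log (ne_of_gt (den_pos hlam (-(1 - θ)) g))
    have h := ((hasDerivAt_id g).sub h1).add h2
    refine h.congr_deriv ?_
    unfold PsiDeriv
    ring
  · intro g
    have h1 := frac_hasDeriv hlam θ θ g
    have h2 := frac_hasDeriv hlam (-(1 - θ)) (1 - θ) g
    have h := ((hasDerivAt_const g (1:ℝ)).sub h1).sub h2
    refine h.congr_deriv ?_
    unfold PsiDeriv2
    have hD1 := den_pos hlam θ g
    have hD2 := den_pos hlam (-(1 - θ)) g
    field_simp
    ring
  · intro g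
    have he1 := Real.exp_pos (θ * g)
    have he2 := Real.exp_pos (-(1 - θ) * g)
    have hb1 := bound_frac hlam θ g
    have hb2 := bound_frac hlam (-(1 - θ)) g
    have hθ2 : (0:ℝ) ≤ θ ^ 2 := sq_nonneg θ
    have hθ3 : (0:ℝ) ≤ (1 - θ) ^ 2 := sq_nonneg (1 - θ)
    have ha1 : (0:ℝ) ≤ lam * (1 - lam) * Real.exp (θ * g) /
        (1 - lam + lam * Real.exp (θ * g)) ^ 2 :=
      div_nonneg (mul_nonneg (mul_nonneg hlam.1.le (by linarith [hlam.2])) he1.le)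
        (sq_nonneg _)
    have ha2 : (0:ℝ) ≤ lam * (1 - lam) * Real.exp (-(1 - θ) * g) /
        (1 - lam + lam * Real.exp (-(1 - θ) * g)) ^ 2 :=
      div_nonneg (mul_nonneg (mul_nonneg hlam.1.le (by linarith [hlam.2])) he2.le)
        (sq_nonneg _)
    have e1 : lam * (1 - lam) * (θ ^ 2 * Real.exp (θ * g) /
        (1 - lam + lam * Real.exp (θ * g)) ^ 2)
        = θ ^ 2 * (lam * (1 - lam) * Real.exp (θ * g) /
        (1 - lam + lam * Real.exp (θ * g)) ^ 2) := by ring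
    have e2 : lam * (1 - lam) * ((1 - θ) ^ 2 * Real.exp (-(1 - θ) * g) /
        (1 - lam + lam * Real.exp (-(1 - θ) * g)) ^ 2)
        = (1 - θ) ^ 2 * (lam * (1 - lam) * Real.exp (-(1 - θ) * g) /
        (1 - lam + lam * Real.exp (-(1 - θ) * g)) ^ 2) := by ring
    have hA1 : lam * (1 - lam) * (θ ^ 2 * Real.exp (θ * g) /
        (1 - lam + lam * Real.exp (θ * g)) ^ 2) ≤ θ ^ 2 / 4 := by
      rw [e1]; nlinarith [mul_le_mul_of_nonneg_left hb1 hθ2]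
    have hA1' : (0:ℝ) ≤ lam * (1 - lam) * (θ ^ 2 * Real.exp (θ * g) /
        (1 - lam + lam * Real.exp (θ * g)) ^ 2) := by
      rw [e1]; exact mul_nonneg hθ2 ha1
    have hA2 : lam * (1 - lam) * ((1 - θ) ^ 2 * Real.exp (-(1 - θ) * g) /
        (1 - lam + lam * Real.exp (-(1 - θ) * g)) ^ 2) ≤ (1 - θ) ^ 2 / 4 := by
      rw [e2]; nlinarith [mul_le_mul_of_nonneg_left hb2 hθ3]
    have hA2' : (0:ℝ) ≤ lam * (1 - lam) * ((1 - θ) ^ 2 * Real.exp (-(1 - θ) * g) /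
        (1 - lam + lam * Real.exp (-(1 - θ) * g)) ^ 2) := by
      rw [e2]; exact mul_nonneg hθ3 ha2
    unfold PsiDeriv2
    rw [abs_le, neg_mul, mul_sub]
    constructor <;> [nlinarith; nlinarith]
  · nlinarith [hθ.1, hθ.2]
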